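/- Let w ∈ B_n have window avoiding the five signed patterns 1 2̄, 2̄ 1, 2̄ 1̄, 3 1 2, 3 1̄ 2, and suppose p = #{j : w_j < 0} ≥ 1, so the negative window values are exactly −1,…,−p. Then the sequence (p, p−1, …, 2, 1, w_1, w_2, …, w_n) of p + n distinct nonzero integers avoids the pattern 312; that is, there are no three positions i < j < k in this sequence whose entries u_i, u_j, u_k satisfy u_j < u_k < u_i. -/

import Mathlib

open scoped BigOperators

/-- Membership in the hyperoctahedral group `B_n`, viewed as permutations `w` of `ℤ`
satisfying `w (-i) = - w i` and fixing everything outside `{-n, …, -1, 1, …, n}`. -/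
def IsBn (n : ℕ) (w : Equiv.Perm ℤ) : Prop :=
  (∀ i : ℤ, w (-i) = - w i) ∧ ∀ i : ℤ, (n : ℤ) < |i| → w i = i

/-- The window of `w` avoids the signed pattern `1 2̄`. -/
def Avoids12bar (n : ℕ) (w : Equiv.Perm ℤ) : Prop :=
  ¬ ∃ i j : ℤ, 1 ≤ i ∧ i < j ∧ j ≤ (n : ℤ) ∧ 0 < w i ∧ w j < 0 ∧ w i < -(w j)

/-- The window of `w` avoids the signed pattern `2̄ 1`. -/
def Avoids2bar1 (n : ℕ) (w : Equiv.Perm ℤ) : Prop :=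
  ¬ ∃ i j : ℤ, 1 ≤ i ∧ i < j ∧ j ≤ (n : ℤ) ∧ w i < 0 ∧ 0 < w j ∧ w j < -(w i)

/-- The window of `w` avoids the signed pattern `2̄ 1̄`. -/
def Avoids2bar1bar (n : ℕ) (w : Equiv.Perm ℤ) : Prop :=
  ¬ ∃ i j : ℤ, 1 ≤ i ∧ i < j ∧ j ≤ (n : ℤ) ∧ w i < w j ∧ w j < 0

/-- The window of `w` avoids the signed pattern `3 1 2`. -/
def Avoids312s (n : ℕ) (w : Equiv.Perm ℤ) : Prop :=
  ¬ ∃ i j k : ℤ, 1 ≤ i ∧ i < j ∧ j < k ∧ k ≤ (n : ℤ) ∧ 0 < w j ∧ w j < w k ∧ w k < w i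

/-- The window of `w` avoids the signed pattern `3 1̄ 2`. -/
def Avoids31bar2 (n : ℕ) (w : Equiv.Perm ℤ) : Prop :=
  ¬ ∃ i j k : ℤ, 1 ≤ i ∧ i < j ∧ j < k ∧ k ≤ (n : ℤ) ∧
    w j < 0 ∧ 0 < w k ∧ w k < w i ∧ -(w j) < w k

/-- The window of `w` avoids the five signed patterns `1 2̄`, `2̄ 1`, `2̄ 1̄`, `3 1 2`, `3 1̄ 2`. -/
def AvoidsFive (n : ℕ) (w : Equiv.Perm ℤ) : Prop :=
  Avoids12bar n w ∧ Avoids2bar1 n w ∧ Avoids2bar1bar n w ∧ Avoids312s n w ∧ Avoids31bar2 n w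

/-- The long one-line notation `(w(-n), …, w(-1), w(1), …, w(n))` avoids the pattern `3412`. -/
def LongAvoids3412 (n : ℕ) (w : Equiv.Perm ℤ) : Prop :=
  ¬ ∃ i1 i2 i3 i4 : ℤ, -(n : ℤ) ≤ i1 ∧ i1 < i2 ∧ i2 < i3 ∧ i3 < i4 ∧ i4 ≤ (n : ℤ) ∧
    i1 ≠ 0 ∧ i2 ≠ 0 ∧ i3 ≠ 0 ∧ i4 ≠ 0 ∧
    w i3 < w i4 ∧ w i4 < w i1 ∧ w i1 < w i2

/-- The long one-line notation `(w(-n), …, w(-1), w(1), …, w(n))` avoids the pattern `4231`. -/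
def LongAvoids4231 (n : ℕ) (w : Equiv.Perm ℤ) : Prop :=
  ¬ ∃ i1 i2 i3 i4 : ℤ, -(n : ℤ) ≤ i1 ∧ i1 < i2 ∧ i2 < i3 ∧ i3 < i4 ∧ i4 ≤ (n : ℤ) ∧
    i1 ≠ 0 ∧ i2 ≠ 0 ∧ i3 ≠ 0 ∧ i4 ≠ 0 ∧
    w i4 < w i2 ∧ w i2 < w i3 ∧ w i3 < w i1

/-- `p`, the number of negative letters in the window `(w 1, …, w n)`. -/
noncomputable def negCount (n : ℕ) (w : Equiv.Perm ℤ) : ℕ :=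
  ((Finset.Icc (1 : ℤ) (n : ℤ)).filter (fun i => w i < 0)).card

/-- `m_j = max ({p} ∪ {w 1, …, w j})`. -/
noncomputable def mval (n : ℕ) (w : Equiv.Perm ℤ) (j : ℤ) : ℤ :=
  (insert ((negCount n w : ℤ)) ((Finset.Icc (1 : ℤ) j).image (fun i => w i))).max'
    (Finset.insert_nonempty _ _)

/-- The strict order `Q(w)` on `{1, …, n}`: `j <_{Q(w)} i` iff `i > m_j`. -/
def qlt (n : ℕ) (w : Equiv.Perm ℤ) (j i : ℤ) : Prop := mval n w j < i

/-- `i` and `j` are incomparable in `Q(w)`. -/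
def QIncomp (n : ℕ) (w : Equiv.Perm ℤ) (i j : ℤ) : Prop :=
  i ≠ j ∧ ¬ qlt n w i j ∧ ¬ qlt n w j i

lemma my_w_zero (w : Equiv.Perm ℤ) (h : ∀ i : ℤ, w (-i) = - w i) : w 0 = 0 := by
  have h0 := h 0
  rw [neg_zero] at h0
  linarith

lemma my_abs_bound (n : ℕ) (w : Equiv.Perm ℤ) (hw : IsBn n w) :
    ∀ i : ℤ, -(n : ℤ) ≤ i → i ≤ (n : ℤ) → -(n : ℤ) ≤ w i ∧ w i ≤ (n : ℤ) := by
  intro i hi1 hi2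
  by_contra h
  have habs : (n : ℤ) < |w i| := by
    rcases abs_cases (w i) with ⟨he, _⟩ | ⟨he, _⟩ <;> omega
  have h2 := hw.2 (w i) habs
  have h3 : w i = i := w.injective h2
  rcases abs_cases (w i) with ⟨he, _⟩ | ⟨he, _⟩ <;> omega

/-- Key structural lemma: positive window values exceed `negCount`. -/
lemma my_key (n : ℕ) (w : Equiv.Perm ℤ) (hw : IsBn n w)
    (h1 : Avoids12bar n w) (h2 : Avoids2bar1 n w) :
    ∀ k : ℤ, 1 ≤ k → k ≤ (n : ℤ) → 0 < w k → (negCount n w : ℤ) < w k := by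
  classical
  have hw0 : w 0 = 0 := my_w_zero w hw.1
  set S : Finset ℤ := (Finset.Icc (1 : ℤ) (n : ℤ)).filter (fun i => w i < 0) with hS
  set P : Finset ℤ := S.image (fun i => -w i) with hP
  have hcard : P.card = negCount n w := by
    rw [hP]
    rw [Finset.card_image_of_injOn]
    · rfl
    · intro a _ b _ hab
      have hab' : -w a = -w b := hab
      exact w.injective (by omega)
  have hPpos : ∀ e ∈ P, 1 ≤ e := by
    intro e he
    obtain ⟨i, hi, hwi⟩ := Finset.mem_image.mp he
    rw [hS, Finset.mem_filter] at hi
    omega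
  have hPle : ∀ e ∈ P, e ≤ (n : ℤ) := by
    intro e he
    obtain ⟨i, hi, hwi⟩ := Finset.mem_image.mp he
    rw [hS, Finset.mem_filter, Finset.mem_Icc] at hi
    have := my_abs_bound n w hw i (by omega) (by omega)
    omega
  have hclose : ∀ c ∈ P, ∀ d : ℤ, 1 ≤ d → d < c → d ∈ P := by
    intro c hc d hd1 hdc
    obtain ⟨i, hi, hwi⟩ := Finset.mem_image.mp hc
    rw [hS, Finset.mem_filter, Finset.mem_Icc] at hi
    obtain ⟨⟨hi1, hin⟩, hineg⟩ := hi
    have hcn : c ≤ (n : ℤ) := by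
      have := my_abs_bound n w hw i (by omega) (by omega)
      omega
    set x := w.symm d with hx
    have hwx : w x = d := w.apply_symm_apply d
    have hx0 : x ≠ 0 := by
      intro h
      rw [h, hw0] at hwx
      omega
    have hxb : -(n : ℤ) ≤ x ∧ x ≤ (n : ℤ) := by
      by_contra h
      have habs : (n : ℤ) < |x| := by
        rcases abs_cases x with ⟨he, _⟩ | ⟨he, _⟩ <;> omega
      have hfix := hw.2 x habs
      rw [hfix] at hwx
      rcases abs_cases x with ⟨he, _⟩ | ⟨he, _⟩ <;> omega
    rcases lt_trichotomy x 0 with hxlt | hxeq | hxgt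
    · -- x < 0 : value -d appears in window at -x
      have hwa : w (-x) = -d := by rw [hw.1 x, hwx]
      refine Finset.mem_image.mpr ⟨-x, ?_, by rw [hwa]; ring⟩
      rw [hS, Finset.mem_filter, Finset.mem_Icc, hwa]
      omega
    · exact absurd hxeq hx0
    · -- x > 0 : d is a positive window value; use patterns
      exfalso
      rcases lt_trichotomy i x with hix | hix | hix
      · exact h2 ⟨i, x, hi1, hix, by omega, hineg, by omega, by omega⟩
      · rw [hix] at hineg; omega
      · exact h1 ⟨x, i, by omega, hix, hin, by omega, hineg, by omega⟩
  have hsub : ∀ c : ℤ, 1 ≤ c → c ≤ (negCount n w : ℤ) → c ∈ P := by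
    intro c hc1 hcp
    by_contra hcP
    have hPsub : P ⊆ Finset.Icc 1 (c - 1) := by
      intro e he
      rw [Finset.mem_Icc]
      have h1e := hPpos e he
      refine ⟨h1e, ?_⟩
      by_contra h
      push_neg at h
      rcases eq_or_lt_of_le (by omega : c ≤ e) with heq | hlt
      · exact hcP (heq ▸ he)
      · exact hcP (hclose e he c hc1 hlt)
    have hle := Finset.card_le_card hPsub
    rw [hcard, Int.card_Icc] at hle
    omega
  -- main argument
  intro k hk1 hkn hpos
  by_contra h
  push_neg at h
  have hmem := hsub (w k) hpos h
  obtain ⟨a, ha, hwa⟩ := Finset.mem_image.mp hmem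
  rw [hS, Finset.mem_filter, Finset.mem_Icc] at ha
  have : w a = w (-k) := by rw [hw.1 k]; omega
  have := w.injective this
  omega

/-- If the window of `w ∈ B_n` avoids the five signed patterns and the
window contains `p ≥ 1` negative letters, then the sequence
`(p, p-1, …, 1, w 1, …, w n)` avoids the pattern `312`. -/
theorem stmt_7 (n : ℕ) (hn : 1 ≤ n) (w : Equiv.Perm ℤ) (hw : IsBn n w)
    (h5 : AvoidsFive n w) (hp : 1 ≤ negCount n w)
    (u : ℤ → ℤ)
    (hu : ∀ i : ℤ, u i =
      if i ≤ (negCount n w : ℤ) then (negCount n w : ℤ) + 1 - i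
      else w (i - (negCount n w : ℤ))) :
    ¬ ∃ i j k : ℤ, 1 ≤ i ∧ i < j ∧ j < k ∧ k ≤ (negCount n w : ℤ) + (n : ℤ) ∧
      u j < u k ∧ u k < u i := by
  obtain ⟨h1b, h2b, h3b, h4b, h5b⟩ := h5
  have hw0 : w 0 = 0 := my_w_zero w hw.1
  have hkey := my_key n w hw h1b h2b
  rintro ⟨i, j, k, hi1, hij, hjk, hkn, hujk, huki⟩
  set p : ℤ := (negCount n w : ℤ) with hpdef
  rw [hu j, hu k] at hujk
  rw [hu k, hu i] at huki
  by_cases hip : i ≤ p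
  · rw [if_pos hip] at huki
    by_cases hjp : j ≤ p
    · rw [if_pos hjp] at hujk
      by_cases hkp : k ≤ p
      · rw [if_pos hkp] at hujk huki
        omega
      · -- case: i, j ≤ p < k
        rw [if_neg hkp] at hujk huki
        have := hkey (k - p) (by omega) (by omega) (by omega)
        omega
    · -- case: i ≤ p < j < k
      have hkp : ¬ k ≤ p := by omega
      rw [if_neg hjp] at hujk
      rw [if_neg hkp] at hujk huki
      rcases lt_trichotomy (w (k - p)) 0 with hs | hs | hs
      · exact h3b ⟨j - p, k - p, by omega, by omega, by omega, hujk, hs⟩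
      · have : k - p = (0 : ℤ) := w.injective (by rw [hs, hw0])
        omega
      · have := hkey (k - p) (by omega) (by omega) hs
        omega
  · -- case: p < i < j < k : all in window
    have hjp : ¬ j ≤ p := by omega
    have hkp : ¬ k ≤ p := by omega
    rw [if_neg hip] at huki
    rw [if_neg hjp] at hujk
    rw [if_neg hkp] at hujk huki
    rcases lt_trichotomy (w (j - p)) 0 with hs | hs | hs
    · rcases lt_trichotomy (w (k - p)) 0 with ht | ht | ht
      · exact h3b ⟨j - p, k - p, by omega, by omega, by omega, hujk, ht⟩
      · have : k - p = (0 : ℤ) := w.injective (by rw [ht, hw0])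
        omega
      · rcases lt_trichotomy (w (k - p)) (-(w (j - p))) with hu' | hu' | hu'
        · exact h2b ⟨j - p, k - p, by omega, by omega, by omega, hs, ht, hu'⟩
        · have : k - p = -(j - p) := w.injective (by rw [hw.1 (j - p)]; omega)
          omega
        · exact h5b ⟨i - p, j - p, k - p, by omega, by omega, by omega, by omega,
            hs, ht, huki, hu'⟩
    · have : j - p = (0 : ℤ) := w.injective (by rw [hs, hw0])
      omega
    · exact h4b ⟨i - p, j - p, k - p, by omega, by omega, by omega, by omega,
        hs, hujk, huki⟩
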